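/- Let k ≥ 2 and 1 ≤ c ≤ d ≤ k be integers. The number of subsets T of a ground set partitioned into blocks G_0, B_1, ..., B_k with |G_0| = k-1 and |B_i| = k for all i, such that |T| = d and T intersects exactly c of the blocks B_1, ..., B_k, is at most C(k,c) · k^{2d-c} / (d-c)!. -/

import Mathlib

open Finset

/-- Bound on `N_{c,d}`: with pairwise disjoint blocks `G₀, B₁, ..., B_k`,
`|G₀| = k-1`, `|B_i| = k`, the number of `d`-element subsets `T` of the union
intersecting exactly `c` of the blocks `B₁, ..., B_k` is at most
`C(k,c)·k^{2d-c}/(d-c)!` (as a real-number inequality). -/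
theorem stmt5 {α : Type*} [DecidableEq α] (k c d : ℕ) (hk : 2 ≤ k)
    (hc : 1 ≤ c) (hcd : c ≤ d) (hdk : d ≤ k)
    (G0 : Finset α) (B : Fin k → Finset α)
    (hG0 : G0.card = k - 1) (hB : ∀ i, (B i).card = k)
    (hdisj : ∀ i j, i ≠ j → Disjoint (B i) (B j))
    (hdisj0 : ∀ i, Disjoint G0 (B i)) :
    ((((G0 ∪ Finset.univ.biUnion B).powerset).filter
        (fun T => T.card = d ∧
          (Finset.univ.filter (fun i => (T ∩ B i).Nonempty)).card = c)).card : ℝ) ≤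
      (Nat.choose k c : ℝ) * (k : ℝ) ^ (2 * d - c) / (Nat.factorial (d - c) : ℝ) := by
  classical
  set A := (((G0 ∪ Finset.univ.biUnion B).powerset).filter
        (fun T => T.card = d ∧
          (Finset.univ.filter (fun i => (T ∩ B i).Nonempty)).card = c)) with hAdef
  -- the set of met blocks
  set Sf : Finset α → Finset (Fin k) :=
    fun T => Finset.univ.filter (fun i => (T ∩ B i).Nonempty) with hSf
  -- representative function
  set rep : Finset α → Fin k → Option α :=
    fun T i => if h : (T ∩ B i).Nonempty then some h.choose else none with hrep
  -- the set of representatives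
  set R : (Fin k → Option α) → Finset α :=
    fun g => Finset.univ.biUnion (fun i => (g i).toFinset) with hR
  have hrepmem : ∀ T i a, rep T i = some a → a ∈ T ∩ B i := by
    intro T i a h
    rw [hrep] at h
    by_cases hne : (T ∩ B i).Nonempty
    · simp only [dif_pos hne, Option.some_inj] at h
      exact h ▸ hne.choose_spec
    · simp [dif_neg hne] at h
  have hRT : ∀ T, R (rep T) ⊆ T := by
    intro T a ha
    simp only [hR, mem_biUnion, Option.mem_toFinset, Option.mem_def] at ha
    obtain ⟨i, _, hi⟩ := ha
    exact (mem_inter.mp (hrepmem T i a hi)).1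
  -- card of representatives
  have hcardR : ∀ T ∈ A, (R (rep T)).card = c := by
    intro T hT
    simp only [hAdef, mem_filter] at hT
    rw [hR]
    rw [Finset.card_biUnion]
    · have : ∀ i ∈ Finset.univ, ((rep T i).toFinset).card
          = if i ∈ Sf T then 1 else 0 := by
        intro i _
        by_cases hne : (T ∩ B i).Nonempty
        · simp [hrep, dif_pos hne, hSf, hne]
        · simp [hrep, dif_neg hne, hSf, hne]
      rw [Finset.sum_congr rfl this, Finset.sum_ite_mem, univ_inter,
        Finset.sum_const, smul_eq_mul, mul_one]
      exact hT.2.2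
    · intro i _ j _ hij
      simp only [Finset.disjoint_left, Option.mem_toFinset, Option.mem_def]
      intro a hai haj
      exact Finset.disjoint_left.mp (hdisj i j hij)
        (mem_inter.mp (hrepmem T i a hai)).2 (mem_inter.mp (hrepmem T j a haj)).2
  -- fiberwise decomposition
  set X := Finset.powersetCard c (Finset.univ : Finset (Fin k)) with hX
  have hfiber : A.card = ∑ S ∈ X, (A.filter (fun T => Sf T = S)).card := by
    apply Finset.card_eq_sum_card_fiberwise
    intro T hT
    change T ∈ A at hT
    show Sf T ∈ X
    simp only [hAdef, mem_filter] at hT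
    simp only [hX, mem_powersetCard_univ]
    exact hT.2.2
  -- per-fiber injection
  have hfib : ∀ S ∈ X, (A.filter (fun T => Sf T = S)).card ≤
      k ^ c * (k - 1 + c * k).choose (d - c) := by
    intro S hS
    simp only [hX, mem_powersetCard_univ] at hS
    set fS : Fin k → Finset (Option α) :=
      fun i => if i ∈ S then (B i).image some else {none} with hfS
    set tgt := (Fintype.piFinset fS) ×ˢ
      (Finset.powersetCard (d - c) (G0 ∪ S.biUnion B)) with htgt
    have key : (A.filter (fun T => Sf T = S)).card ≤ tgt.card := by
      apply Finset.card_le_card_of_injOn (fun T => (rep T, T \ R (rep T)))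
      · intro T hT
        change T ∈ A.filter (fun T => Sf T = S) at hT
        show (rep T, T \ R (rep T)) ∈ tgt
        simp only [mem_filter] at hT
        obtain ⟨hTA, hTS⟩ := hT
        have hTA' := hTA
        simp only [hAdef, mem_filter, mem_powerset] at hTA'
        obtain ⟨hTsub, hTd, hTc⟩ := hTA'
        simp only [htgt, Finset.mem_product]
        constructor
        · rw [Fintype.mem_piFinset]
          intro i
          by_cases hi : i ∈ S
          · have hne : (T ∩ B i).Nonempty := by
              have := hTS ▸ hi
              simpa [hSf] using this
            simp only [hfS, if_pos hi, hrep, dif_pos hne, mem_image]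
            exact ⟨hne.choose, (mem_inter.mp hne.choose_spec).2, rfl⟩
          · have hne : ¬ (T ∩ B i).Nonempty := by
              intro h
              exact hi (hTS ▸ (by simpa [hSf] using h))
            simp [hfS, if_neg hi, hrep, dif_neg hne]
        · rw [mem_powersetCard]
          constructor
          · intro a ha
            have haT : a ∈ T := (Finset.sdiff_subset) ha
            have := hTsub haT
            rw [mem_union] at this
            rcases this with h | h
            · exact mem_union_left _ h
            · rw [mem_biUnion] at h
              obtain ⟨i, _, hi⟩ := h
              have hiS : i ∈ S := by
                rw [← hTS]
                simp only [hSf, mem_filter, mem_univ, true_and]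
                exact ⟨a, mem_inter.mpr ⟨haT, hi⟩⟩
              exact mem_union_right _ (mem_biUnion.mpr ⟨i, hiS, hi⟩)
          · rw [Finset.card_sdiff_of_subset (hRT T), hTd, hcardR T hTA]
      · intro T1 hT1 T2 hT2 heq
        simp only [Prod.mk.injEq] at heq
        have h1 : T1 = (T1 \ R (rep T1)) ∪ R (rep T1) :=
          (Finset.sdiff_union_of_subset (hRT T1)).symm
        rw [h1, heq.2, heq.1, Finset.sdiff_union_of_subset (hRT T2)]
    refine key.trans ?_
    rw [htgt, Finset.card_product, Fintype.card_piFinset,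
      Finset.card_powersetCard]
    have hprod : ∏ i, (fS i).card = k ^ c := by
      have : ∀ i ∈ Finset.univ, (fS i).card = if i ∈ S then k else 1 := by
        intro i _
        by_cases hi : i ∈ S
        · simp only [hfS, if_pos hi,
            Finset.card_image_of_injective _ (Option.some_injective α), hB i]
        · simp [hfS, if_neg hi]
      rw [Finset.prod_congr rfl this, Finset.prod_ite_mem, univ_inter,
        Finset.prod_const, hS]
    rw [hprod]
    apply Nat.mul_le_mul_left
    apply Nat.choose_le_choose
    calc (G0 ∪ S.biUnion B).card ≤ G0.card + (S.biUnion B).card :=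
          Finset.card_union_le _ _
      _ ≤ (k - 1) + c * k := by
          apply Nat.add_le_add (le_of_eq hG0)
          calc (S.biUnion B).card ≤ ∑ i ∈ S, (B i).card := Finset.card_biUnion_le
            _ = c * k := by rw [Finset.sum_congr rfl (fun i _ => hB i),
                Finset.sum_const, hS, smul_eq_mul]
  -- total nat bound
  have hnat : A.card ≤ k.choose c * (k ^ c * (k - 1 + c * k).choose (d - c)) := by
    rw [hfiber]
    calc ∑ S ∈ X, (A.filter (fun T => Sf T = S)).card
        ≤ ∑ _S ∈ X, k ^ c * (k - 1 + c * k).choose (d - c) :=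
          Finset.sum_le_sum hfib
      _ = k.choose c * (k ^ c * (k - 1 + c * k).choose (d - c)) := by
          rw [Finset.sum_const, smul_eq_mul, hX, Finset.card_powersetCard,
            Finset.card_univ, Fintype.card_fin]
  -- pass to the reals
  have hpow : (k - 1 + c * k) ^ (d - c) ≤ (k ^ 2) ^ (d - c) := by
    rcases Nat.eq_or_lt_of_le hcd with h | h
    · simp [← h]
    · apply Nat.pow_le_pow_left
      have hck : c ≤ k - 1 := by omega
      have step1 : k - 1 + c * k ≤ (k - 1) + (k - 1) * k :=
        Nat.add_le_add_left (Nat.mul_le_mul_right k hck) _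
      refine step1.trans ?_
      obtain ⟨t, rfl⟩ : ∃ t, k = t + 2 := ⟨k - 2, by omega⟩
      have ht : t + 2 - 1 = t + 1 := by omega
      rw [ht]
      nlinarith
  have hfacpos : (0 : ℝ) < (Nat.factorial (d - c) : ℝ) := by
    exact_mod_cast (d - c).factorial_pos
  have hexp : c + 2 * (d - c) = 2 * d - c := by omega
  calc (A.card : ℝ)
      ≤ (k.choose c : ℝ) * ((k : ℝ) ^ c * ((k - 1 + c * k).choose (d - c) : ℝ)) := by
        exact_mod_cast hnat
    _ ≤ (k.choose c : ℝ) * ((k : ℝ) ^ c *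
          (((k - 1 + c * k : ℕ) : ℝ) ^ (d - c) / ((d - c).factorial : ℝ))) := by
        gcongr
        exact_mod_cast Nat.choose_le_pow_div (d - c) (k - 1 + c * k)
    _ ≤ (k.choose c : ℝ) * ((k : ℝ) ^ c *
          (((k : ℝ) ^ 2) ^ (d - c) / ((d - c).factorial : ℝ))) := by
        have hpowR : ((k - 1 + c * k : ℕ) : ℝ) ^ (d - c) ≤ ((k : ℝ) ^ 2) ^ (d - c) := by
          have : ((k : ℝ) ^ 2) ^ (d - c) = (((k ^ 2) ^ (d - c) : ℕ) : ℝ) := by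
            push_cast; ring
          rw [this]
          exact_mod_cast hpow
        refine mul_le_mul_of_nonneg_left ?_ (Nat.cast_nonneg _)
        refine mul_le_mul_of_nonneg_left ?_ (by positivity)
        exact div_le_div_of_nonneg_right hpowR hfacpos.le
    _ = (Nat.choose k c : ℝ) * (k : ℝ) ^ (2 * d - c) / ((d - c).factorial : ℝ) := by
        rw [← pow_mul, ← hexp, pow_add]
        ring
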